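/- Let G be a finite simple graph on {1,…,n} that is a proper interval graph with respect to the natural order: whenever i < j and {i,j} ∈ E(G), the set {i, i+1, …, j} is a clique of G. Suppose the maximal cliques of G are exactly the intervals L_q = {a_q, a_q+1, …, b_q} for q = 1,…,p, with p ≥ 2, a_1 = 1 < a_2 < … < a_p, b_1 < b_2 < … < b_p = n and a_{q+1} ≤ b_q + 1 for all q, and set s = min{ |L_q ∩ L_{q+1}| : 1 ≤ q ≤ p−1 } = min_q (b_q − a_{q+1} + 1). Then for an integer k ≥ 0 there exist indices 1 ≤ i_1 < i_2 < … < i_{k+2} ≤ n and t < k+2 with {i_t, i_ℓ} ∉ E(G) for all t < ℓ ≤ k+2 if and only if k ≤ n − s − 2. (Equivalently, HS_k(I(G^c)) ≠ (0) iff k ≤ n − s − 2; in particular projdim I(G^c) = n − s − 2.) -/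

import Mathlib

set_option maxHeartbeats 1000000

/-- Every clique (given as a finset) in a graph on `Fin n` extends to a maximal clique. -/
lemma stmt13_exists_maximal_clique {n : ℕ} (G : SimpleGraph (Fin n)) (C : Finset (Fin n))
    (hC : G.IsClique (C : Set (Fin n))) :
    ∃ M : Finset (Fin n), C ⊆ M ∧ G.IsClique (M : Set (Fin n)) ∧
      ∀ E : Set (Fin n), G.IsClique E → (M : Set (Fin n)) ⊆ E → E = (M : Set (Fin n)) := by
  classical
  obtain ⟨M, hM, hmax⟩ := Set.Finite.exists_maximalFor Finset.card
    {D : Finset (Fin n) | G.IsClique (D : Set (Fin n)) ∧ C ⊆ D} (Set.toFinite _)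
    ⟨C, hC, Finset.Subset.refl C⟩
  refine ⟨M, hM.2, hM.1, ?_⟩
  intro E hE hME
  have hEfin : E.Finite := Set.toFinite E
  have hMD : M ⊆ hEfin.toFinset := by
    intro x hx
    rw [Set.Finite.mem_toFinset]
    exact hME hx
  have hD : hEfin.toFinset ∈ {D : Finset (Fin n) | G.IsClique (D : Set (Fin n)) ∧ C ⊆ D} := by
    constructor
    · rwa [Set.Finite.coe_toFinset]
    · exact hM.2.trans hMD
  have hcard := hmax hD (Finset.card_le_card hMD)
  have heq : M = hEfin.toFinset := Finset.eq_of_subset_of_card_le hMD hcard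
  rw [heq]
  exact (Set.Finite.coe_toFinset hEfin).symm

/-- let `G` be a proper interval graph on `{0, …, n-1}` (natural order) whose
maximal cliques are exactly the intervals `L_q = [a q, b q]`, `q = 0, …, p-1`, with `p ≥ 2`,
`a 0 = 0`, `a`, `b` strictly increasing, `b (p-1) = n-1`, consecutive intervals overlapping
(`a (q+1) ≤ b q + 1`), and let `s = min_q |L_q ∩ L_{q+1}| = min_q (b q + 1 - a (q+1))`. Then for
`k ≥ 0` there exist `i_1 < ⋯ < i_{k+2}` and `t < k+2` with `{i_t, i_ℓ} ∉ E(G)` for all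
`t < ℓ ≤ k+2` if and only if `k ≤ n - s - 2` (equivalently, `HS_k(I(G^c)) ≠ 0` iff
`k ≤ n - s - 2`). -/
theorem stmt_13 {n p : ℕ} (hn : 0 < n) (hp : 2 ≤ p) (G : SimpleGraph (Fin n))
    (a b : Fin p → Fin n)
    (proper : ∀ i j : Fin n, i < j → G.Adj i j → G.IsClique (Set.Icc i j))
    (hab : ∀ q, a q ≤ b q)
    (ha0 : a ⟨0, by omega⟩ = ⟨0, hn⟩)
    (hbl : b ⟨p - 1, by omega⟩ = ⟨n - 1, by omega⟩)
    (hamono : StrictMono a) (hbmono : StrictMono b)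
    (hoverlap : ∀ q r : Fin p, (q : ℕ) + 1 = (r : ℕ) → (a r : ℕ) ≤ (b q : ℕ) + 1)
    (hcliques : ∀ C : Set (Fin n),
      (G.IsClique C ∧ ∀ D : Set (Fin n), G.IsClique D → C ⊆ D → D = C) ↔
      (∃ q : Fin p, C = Set.Icc (a q) (b q)))
    (s : ℕ)
    (hs : IsLeast {m : ℕ | ∃ q r : Fin p, (q : ℕ) + 1 = (r : ℕ) ∧
      m = (b q : ℕ) + 1 - (a r : ℕ)} s)
    (k : ℕ) :
    (∃ T : Finset (Fin n), T.card = k + 2 ∧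
      ∃ t ∈ T, (∃ l ∈ T, t < l) ∧ ∀ l ∈ T, t < l → ¬ G.Adj t l) ↔ k ≤ n - s - 2 := by
  classical
  -- each interval is a clique
  have hclq : ∀ q : Fin p, G.IsClique (Set.Icc (a q) (b q)) :=
    fun q => ((hcliques _).mpr ⟨q, rfl⟩).1
  -- easy direction of the adjacency characterization
  have adj_easy : ∀ i j : Fin n, i < j → ∀ q : Fin p, a q ≤ i → j ≤ b q → G.Adj i j := by
    intro i j hij q h1 h2
    exact hclq q (Set.mem_Icc.mpr ⟨h1, le_trans (le_of_lt hij) h2⟩)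
      (Set.mem_Icc.mpr ⟨le_trans h1 (le_of_lt hij), h2⟩) (ne_of_lt hij)
  -- hard direction: any edge lies inside some interval
  have adj_hard : ∀ i j : Fin n, G.Adj i j →
      ∃ q : Fin p, a q ≤ i ∧ i ≤ b q ∧ a q ≤ j ∧ j ≤ b q := by
    intro i j hij
    have hne : i ≠ j := hij.ne
    have hclique : G.IsClique (({i, j} : Finset (Fin n)) : Set (Fin n)) := by
      have : (({i, j} : Finset (Fin n)) : Set (Fin n)) = ({i, j} : Set (Fin n)) := by
        simp
      rw [this]
      exact SimpleGraph.isClique_pair.mpr (fun _ => hij)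
    obtain ⟨M, hCM, hMclq, hMmax⟩ := stmt13_exists_maximal_clique G {i, j} hclique
    obtain ⟨q, hq⟩ := (hcliques (M : Set (Fin n))).mp ⟨hMclq, hMmax⟩
    have hi : i ∈ (M : Set (Fin n)) := by
      exact_mod_cast hCM (by simp : i ∈ ({i, j} : Finset (Fin n)))
    have hj : j ∈ (M : Set (Fin n)) := by
      exact_mod_cast hCM (by simp : j ∈ ({i, j} : Finset (Fin n)))
    rw [hq] at hi hj
    exact ⟨q, hi.1, hi.2, hj.1, hj.2⟩
  constructor
  · -- forward direction
    rintro ⟨T, hTcard, t, htT, ⟨l1, hl1T, hl1⟩, hnadj⟩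
    -- the largest q with a q ≤ t
    have hQne : (Finset.univ.filter (fun q : Fin p => a q ≤ t)).Nonempty := by
      refine ⟨⟨0, by omega⟩, ?_⟩
      simp only [Finset.mem_filter, Finset.mem_univ, true_and, ha0]
      exact Fin.mk_le_mk.mpr (Nat.zero_le _) |>.trans (le_refl t) |>.trans (le_refl t)
    set qm : Fin p := (Finset.univ.filter (fun q : Fin p => a q ≤ t)).max' hQne with hqm
    have hqm_mem : a qm ≤ t := by
      have := (Finset.univ.filter (fun q : Fin p => a q ≤ t)).max'_mem hQne
      simpa using this
    have hqm_max : ∀ q : Fin p, a q ≤ t → q ≤ qm := by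
      intro q hq
      exact Finset.le_max' _ q (by simpa using hq)
    -- every element of T above t is above b qm
    have habove : ∀ l ∈ T, t < l → (b qm : ℕ) < (l : ℕ) := by
      intro l hl hlt
      by_contra hcon
      push_neg at hcon
      exact hnadj l hl hlt (adj_easy t l hlt qm hqm_mem (Fin.le_def.mpr hcon))
    -- qm is not the last index
    have hbqm_lt : (b qm : ℕ) < n - 1 := by
      have h1 := habove l1 hl1T hl1
      have h2 : (l1 : ℕ) < n := l1.isLt
      omega
    have hqmlt : (qm : ℕ) < p - 1 := by
      have hlt : b qm < b ⟨p - 1, by omega⟩ := by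
        rw [hbl]
        exact Fin.lt_def.mpr hbqm_lt
      exact Fin.lt_def.mp (hbmono.lt_iff_lt.mp hlt)
    set r : Fin p := ⟨(qm : ℕ) + 1, by omega⟩ with hr
    have har_gt : (t : ℕ) < (a r : ℕ) := by
      by_contra hcon
      push_neg at hcon
      have := hqm_max r (Fin.le_def.mpr hcon)
      rw [Fin.le_def] at this
      simp [hr] at this
    have hsle : s ≤ (b qm : ℕ) + 1 - (a r : ℕ) := hs.2 ⟨qm, r, rfl, rfl⟩
    have hover : (a r : ℕ) ≤ (b qm : ℕ) + 1 := hoverlap qm r rfl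
    -- cardinality bound
    have hsub : T.image Fin.val ⊆ Finset.Iic (t : ℕ) ∪ Finset.Ioc (b qm : ℕ) (n - 1) := by
      intro x hx
      rw [Finset.mem_image] at hx
      obtain ⟨y, hy, rfl⟩ := hx
      rcases le_or_gt y t with h | h
      · exact Finset.mem_union_left _ (Finset.mem_Iic.mpr (Fin.le_def.mp h))
      · refine Finset.mem_union_right _ (Finset.mem_Ioc.mpr ⟨habove y hy h, ?_⟩)
        omega
    have hcard1 : (T.image Fin.val).card = k + 2 := by
      rw [Finset.card_image_of_injective T Fin.val_injective, hTcard]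
    have hcard2 : (T.image Fin.val).card ≤ ((t : ℕ) + 1) + ((n - 1) - (b qm : ℕ)) := by
      calc (T.image Fin.val).card ≤ (Finset.Iic (t : ℕ) ∪ Finset.Ioc (b qm : ℕ) (n - 1)).card :=
            Finset.card_le_card hsub
        _ ≤ (Finset.Iic (t : ℕ)).card + (Finset.Ioc (b qm : ℕ) (n - 1)).card :=
            Finset.card_union_le _ _
        _ = ((t : ℕ) + 1) + ((n - 1) - (b qm : ℕ)) := by
            rw [Nat.card_Iic, Nat.card_Ioc]
    have hbn : (b qm : ℕ) < n := (b qm).isLt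
    omega
  · -- backward direction
    intro hk
    obtain ⟨⟨q, r, hqr, hsval⟩, _⟩ := hs
    set ar : ℕ := (a r : ℕ) with har
    set bq : ℕ := (b q : ℕ) with hbq
    have har1 : 1 ≤ ar := by
      have h0r : (⟨0, by omega⟩ : Fin p) < r := by
        exact Fin.lt_def.mpr (show 0 < (r : ℕ) by omega)
      have h2 := hamono h0r
      rw [ha0] at h2
      exact Fin.lt_def.mp h2
    have hbqlt : bq < n - 1 := by
      have hrle : (r : ℕ) ≤ p - 1 := by omega
      have hql : q < (⟨p - 1, by omega⟩ : Fin p) := by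
        exact Fin.lt_def.mpr (show (q : ℕ) < p - 1 by omega)
      have h2 := hbmono hql
      rw [hbl] at h2
      exact Fin.lt_def.mp h2
    have hover : ar ≤ bq + 1 := hoverlap q r hqr
    have harn : ar < n := (a r).isLt
    -- choose sizes of the low and high blocks
    set hh : ℕ := min (k + 1) ((n - 1) - bq) with hhh
    set j : ℕ := k + 2 - hh with hj
    have hh1 : 1 ≤ hh := by omega
    have hh2 : hh ≤ (n - 1) - bq := by omega
    have hj1 : 1 ≤ j := by omega
    have hjar : j ≤ ar := by omega
    have hjh : j + hh = k + 2 := by omega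
    -- the candidate set, in ℕ
    set S : Finset ℕ := Finset.Icc (ar - j) (ar - 1) ∪ Finset.Ioc bq (bq + hh) with hS
    have hSlt : ∀ m ∈ S, m < n := by
      intro m hm
      rw [hS, Finset.mem_union, Finset.mem_Icc, Finset.mem_Ioc] at hm
      omega
    refine ⟨S.attachFin hSlt, ?_, ⟨ar - 1, by omega⟩, ?_, ⟨⟨bq + 1, by omega⟩, ?_, ?_⟩, ?_⟩
    · -- cardinality
      rw [Finset.card_attachFin, hS, Finset.card_union_of_disjoint, Nat.card_Icc, Nat.card_Ioc]
      · omega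
      · rw [Finset.disjoint_left]
        intro m h1 h2
        rw [Finset.mem_Icc] at h1
        rw [Finset.mem_Ioc] at h2
        omega
    · rw [Finset.mem_attachFin, hS, Finset.mem_union, Finset.mem_Icc]
      simp only [Fin.val_mk]
      left; omega
    · rw [Finset.mem_attachFin, hS, Finset.mem_union, Finset.mem_Ioc]
      simp only [Fin.val_mk]
      right; omega
    · rw [Fin.lt_def]; simp only [Fin.val_mk]; omega
    · intro l hl hlt hadj
      rw [Finset.mem_attachFin, hS, Finset.mem_union, Finset.mem_Icc, Finset.mem_Ioc] at hl
      rw [Fin.lt_def] at hlt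
      simp only [Fin.val_mk] at hlt
      have hlbq : bq < (l : ℕ) := by omega
      obtain ⟨q', h1, _, _, h4⟩ := adj_hard _ _ hadj
      have hq'r : q' < r := by
        apply hamono.lt_iff_lt.mp
        rw [Fin.lt_def]
        rw [Fin.le_def] at h1
        simp only [Fin.val_mk] at h1
        omega
      have hq'q : q' ≤ q := by
        rw [Fin.le_def]
        rw [Fin.lt_def] at hq'r
        omega
      have hbb : (b q' : ℕ) ≤ bq := hbmono.monotone hq'q
      rw [Fin.le_def] at h4
      omega
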